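/- Fix α > 0 and let μ be an absolutely continuous probability measure on ℝ. Let A be the expansion map (Aμ is the measure whose icdf is X_μ(m) + αm), and T_μ(x) := x + α·μ((-∞,x)). Then Aμ = (T_μ)_# μ, i.e., the expansion of μ equals the push-forward of μ under T_μ. -/

import Mathlib

open MeasureTheory Set

/-- Inverse cumulative distribution function `X m = inf {x | μ((-∞,x]) > m}`. -/
noncomputable def icdf (μ : Measure ℝ) (m : ℝ) : ℝ :=
  sInf {x : ℝ | m < (μ (Iic x)).toReal}

/-- The expansion map `A`: `Aμ` is the measure whose icdf is `X_μ(m) + α m`;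
equivalently the push-forward of Lebesgue measure on (0,1) under `m ↦ X_μ(m) + α m`. -/
noncomputable def expand (α : ℝ) (μ : Measure ℝ) : Measure ℝ :=
  Measure.map (fun m => icdf μ m + α * m) (volume.restrict (Ioo (0:ℝ) 1))

/-- The map `T_μ(x) = x + α μ((-∞,x))`. -/
noncomputable def Tmap (α : ℝ) (μ : Measure ℝ) (x : ℝ) : ℝ :=
  x + α * (μ (Iio x)).toReal

open ProbabilityTheory Filter Topology

section Aux

variable {μ : Measure ℝ}

lemma icdf_eq_sInf_cdf [IsProbabilityMeasure μ] (m : ℝ) :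
    icdf μ m = sInf {x : ℝ | m < cdf μ x} := by
  simp only [icdf, cdf_eq_real, measureReal_def]

lemma cdfSet_nonempty [IsProbabilityMeasure μ] {m : ℝ} (hm : m < 1) :
    {x : ℝ | m < cdf μ x}.Nonempty := by
  obtain ⟨x, hx⟩ := ((tendsto_cdf_atTop μ).eventually (eventually_gt_nhds hm)).exists
  exact ⟨x, hx⟩

lemma cdfSet_bddBelow [IsProbabilityMeasure μ] {m : ℝ} (hm : 0 < m) :
    BddBelow {x : ℝ | m < cdf μ x} := by
  obtain ⟨y, hy⟩ := ((tendsto_cdf_atBot μ).eventually (eventually_lt_nhds hm)).exists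
  refine ⟨y, fun x hx => ?_⟩
  by_contra h
  push_neg at h
  exact absurd (lt_trans hx ((monotone_cdf μ (le_of_lt h)).trans_lt hy)) (lt_irrefl m)

lemma leftLim_cdf_eq [IsProbabilityMeasure μ] (hac : μ ≪ volume) (x : ℝ) :
    Function.leftLim (cdf μ) x = cdf μ x := by
  have h0 : μ {x} = 0 := hac (by simp)
  rw [← measure_cdf μ, StieltjesFunction.measure_singleton, ENNReal.ofReal_eq_zero] at h0
  exact le_antisymm ((cdf μ).mono.leftLim_le le_rfl) (by linarith)

lemma cdf_icdf [IsProbabilityMeasure μ] (hac : μ ≪ volume) {m : ℝ} (hm : m ∈ Ioo (0:ℝ) 1) :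
    cdf μ (icdf μ m) = m := by
  rw [icdf_eq_sInf_cdf]
  set S := {x : ℝ | m < cdf μ x} with hS
  have hne : S.Nonempty := cdfSet_nonempty hm.2
  have hbd : BddBelow S := cdfSet_bddBelow hm.1
  refine le_antisymm ?_ ?_
  · by_contra h
    push_neg at h
    have hll : Tendsto (cdf μ) (𝓝[<] sInf S) (𝓝 (cdf μ (sInf S))) := by
      have := (cdf μ).mono.tendsto_leftLim (sInf S)
      rwa [leftLim_cdf_eq hac] at this
    obtain ⟨y, hy1, hy2⟩ := ((hll.eventually (eventually_gt_nhds h)).and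
      self_mem_nhdsWithin).exists
    exact absurd (csInf_le hbd hy1) (not_le.2 hy2)
  · have hrc : Tendsto (cdf μ) (𝓝[>] sInf S) (𝓝 (cdf μ (sInf S))) :=
      ((cdf μ).right_continuous (sInf S)).tendsto.mono_left
        (nhdsWithin_mono _ Ioi_subset_Ici_self)
    refine ge_of_tendsto hrc ?_
    filter_upwards [self_mem_nhdsWithin] with y hy
    obtain ⟨z, hz, hzy⟩ := exists_lt_of_csInf_lt hne hy
    exact le_of_lt (lt_of_lt_of_le hz (monotone_cdf μ hzy.le))

lemma icdf_monotoneOn [IsProbabilityMeasure μ] :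
    MonotoneOn (icdf μ) (Ioo (0:ℝ) 1) := by
  intro a ha b hb hab
  rw [icdf_eq_sInf_cdf, icdf_eq_sInf_cdf]
  exact csInf_le_csInf (cdfSet_bddBelow ha.1) (cdfSet_nonempty hb.2)
    (fun x hx => lt_of_le_of_lt hab hx)

lemma icdf_aemeasurable [IsProbabilityMeasure μ] :
    AEMeasurable (icdf μ) (volume.restrict (Ioo (0:ℝ) 1)) :=
  aemeasurable_restrict_of_monotoneOn measurableSet_Ioo icdf_monotoneOn

lemma map_icdf [IsProbabilityMeasure μ] (hac : μ ≪ volume) :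
    Measure.map (icdf μ) (volume.restrict (Ioo (0:ℝ) 1)) = μ := by
  refine Measure.ext_of_Iic _ _ (fun a => ?_)
  rw [Measure.map_apply_of_aemeasurable icdf_aemeasurable measurableSet_Iic,
    Measure.restrict_apply' measurableSet_Ioo, ← ofReal_cdf μ a]
  refine le_antisymm ?_ ?_
  · calc volume (icdf μ ⁻¹' Iic a ∩ Ioo 0 1) ≤ volume (Ioc (0:ℝ) (cdf μ a)) := by
          refine measure_mono (fun m hm => ?_)
          obtain ⟨hm1, hm2⟩ := hm
          refine ⟨hm2.1, ?_⟩
          have := cdf_icdf hac hm2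
          rw [← this]
          exact monotone_cdf μ hm1
      _ = ENNReal.ofReal (cdf μ a) := by rw [Real.volume_Ioc, sub_zero]
  · calc ENNReal.ofReal (cdf μ a) = volume (Ioo (0:ℝ) (min (cdf μ a) 1)) := by
          rw [Real.volume_Ioo, sub_zero, min_eq_left (cdf_le_one μ a)]
      _ ≤ volume (icdf μ ⁻¹' Iic a ∩ Ioo 0 1) := by
          refine measure_mono (fun m hm => ?_)
          obtain ⟨hm1, hm2⟩ := hm
          have hma : m < cdf μ a := lt_of_lt_of_le hm2 (min_le_left _ _)
          have hm1' : m < 1 := lt_of_lt_of_le hm2 (min_le_right _ _)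
          refine ⟨?_, hm1, hm1'⟩
          show icdf μ m ≤ a
          rw [icdf_eq_sInf_cdf]
          exact csInf_le (cdfSet_bddBelow hm1) hma

end Aux

/-- For an absolutely continuous probability measure μ,
the expansion of μ equals the push-forward of μ under `T_μ`: `Aμ = (T_μ)_# μ`. -/
theorem expand_eq_pushforward_Tmap (α : ℝ) (hα : 0 < α)
    (μ : Measure ℝ) [IsProbabilityMeasure μ] (hac : μ ≪ volume) :
    expand α μ = Measure.map (Tmap α μ) μ := by
  have hTmono : Monotone (Tmap α μ) := by
    intro x y hxy
    have h : (μ (Iio x)).toReal ≤ (μ (Iio y)).toReal :=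
      ENNReal.toReal_mono (measure_ne_top μ _) (measure_mono (Iio_subset_Iio hxy))
    unfold Tmap
    nlinarith [hα.le]
  have hT : Measurable (Tmap α μ) := hTmono.measurable
  rw [expand]
  nth_rewrite 3 [← map_icdf (μ := μ) hac]
  rw [AEMeasurable.map_map_of_aemeasurable hT.aemeasurable icdf_aemeasurable]
  refine Measure.map_congr ?_
  refine (ae_restrict_iff' measurableSet_Ioo).2 (ae_of_all _ fun m hm => ?_)
  show icdf μ m + α * m = Tmap α μ (icdf μ m)
  have h0 : μ {icdf μ m} = 0 := hac (by simp)
  have h1 : μ (Iio (icdf μ m)) = μ (Iic (icdf μ m)) := by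
    rw [← Iio_union_right]
    exact le_antisymm (measure_mono subset_union_left)
      ((measure_union_le _ _).trans_eq (by rw [h0, add_zero]))
  have h2 : (μ (Iic (icdf μ m))).toReal = m := by
    rw [← measureReal_def, ← ProbabilityTheory.cdf_eq_real, cdf_icdf hac hm]
  unfold Tmap
  rw [h1, h2]
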